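/- Under the delayed leader dynamics X_ℓ(k+1) = (1-β)X_ℓ(k) + β V(k) X_ℓ(k-τ) with each V(k) doubly stochastic with second largest singular value at most δ_C ∈ (0,1), initial condition X_ℓ(k) = X_ℓ(0) for k ∈ [-τ,0], and β ∈ (0, 1 - e^{-ln(1/δ_C)/τ}), setting η = 1 - β + δ_C β/(1-β)^τ, the leaders reach consensus exponentially: ‖X_ℓ(k) - 𝟙 x̄_ℓ(k)ᵀ‖ ≤ 2η^k ‖X_ℓ(0)‖ for all k ≥ 0, where x̄_ℓ(k) is the row average of X_ℓ(k) and η < 1. -/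

import Mathlib

open Matrix

attribute [local instance] Matrix.frobeniusNormedAddCommGroup
attribute [local instance] Matrix.frobeniusNormedSpace

/-- Deviation of a matrix from the all-ones-times-row-average matrix, `Y = X - 𝟙 x̄ᵀ`. -/
noncomputable def rowDev {r d : ℕ} (M : Matrix (Fin r) (Fin d) ℝ) : Matrix (Fin r) (Fin d) ℝ :=
  M - Matrix.of fun _ j => (r : ℝ)⁻¹ * ∑ a, M a j

/-- Column sums of the deviation vanish. -/
lemma rowDev_colsum {r d : ℕ} (hr : 0 < r) (M : Matrix (Fin r) (Fin d) ℝ) (j : Fin d) :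
    ∑ a, rowDev M a j = 0 := by
  have hrne : (r : ℝ) ≠ 0 := Nat.cast_ne_zero.mpr hr.ne'
  simp only [rowDev, Matrix.sub_apply, Matrix.of_apply, Finset.sum_sub_distrib,
    Finset.sum_const, Finset.card_univ, Fintype.card_fin, nsmul_eq_mul]
  field_simp
  ring

/-- Linearity of `rowDev` over the affine combination. -/
lemma rowDev_comb {r d : ℕ} (a b : ℝ) (X Z : Matrix (Fin r) (Fin d) ℝ) :
    rowDev (a • X + b • Z) = a • rowDev X + b • rowDev Z := by
  ext i j
  simp only [rowDev, Matrix.sub_apply, Matrix.add_apply, Matrix.smul_apply, Matrix.of_apply,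
    smul_eq_mul, Finset.sum_add_distrib, ← Finset.mul_sum]
  ring

/-- `rowDev` commutes with multiplication by a doubly stochastic matrix. -/
lemma rowDev_mul {r d : ℕ} (V : Matrix (Fin r) (Fin r) ℝ) (hV : V ∈ doublyStochastic ℝ (Fin r))
    (X : Matrix (Fin r) (Fin d) ℝ) : rowDev (V * X) = V * rowDev X := by
  have hrow : ∀ i, ∑ j, V i j = 1 := sum_row_of_mem_doublyStochastic hV
  have hcol : ∀ j, ∑ i, V i j = 1 := sum_col_of_mem_doublyStochastic hV
  ext i j
  have hs : ∑ x : Fin r, ∑ b, V x b * X b j = ∑ b, X b j := by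
    rw [Finset.sum_comm]
    simp [← Finset.sum_mul, hcol]
  simp only [rowDev, Matrix.sub_apply, Matrix.of_apply, Matrix.mul_apply, mul_sub]
  rw [Finset.sum_sub_distrib, ← Finset.sum_mul, hrow, one_mul, hs]

/-- The Frobenius norm of the row-average matrix is bounded by the norm of the matrix. -/
lemma avg_norm_le {r d : ℕ} (hr : 0 < r) (M : Matrix (Fin r) (Fin d) ℝ) :
    ‖(Matrix.of fun (_ : Fin r) j => (r : ℝ)⁻¹ * ∑ a, M a j : Matrix (Fin r) (Fin d) ℝ)‖
      ≤ ‖M‖ := by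
  have hrne : (r : ℝ) ≠ 0 := Nat.cast_ne_zero.mpr hr.ne'
  have hrpos : (0 : ℝ) < r := Nat.cast_pos.mpr hr
  rw [Matrix.frobenius_norm_def, Matrix.frobenius_norm_def]
  apply Real.rpow_le_rpow
  · positivity
  · have swap : ∀ (f : Fin r → Fin d → ℝ), ∑ i, ∑ j, f i j = ∑ j, ∑ i, f i j :=
      fun f => Finset.sum_comm
    rw [swap, swap]
    apply Finset.sum_le_sum
    intro j _
    have h1 : ∀ x : ℝ, ‖x‖ ^ (2:ℝ) = x ^ 2 := by
      intro x
      rw [Real.rpow_two, Real.norm_eq_abs, sq_abs]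
    simp only [Matrix.of_apply, h1]
    have hcs : (∑ a, M a j) ^ 2 ≤ (r : ℝ) * ∑ a, M a j ^ 2 := by
      have := sq_sum_le_card_mul_sum_sq (s := (Finset.univ : Finset (Fin r)))
        (f := fun a => M a j)
      simpa using this
    calc ∑ _a : Fin r, ((r : ℝ)⁻¹ * ∑ a, M a j) ^ 2
        = (r : ℝ) * ((r : ℝ)⁻¹ * ∑ a, M a j) ^ 2 := by
          simp [Finset.sum_const, Finset.card_univ]
      _ = (r : ℝ)⁻¹ * (∑ a, M a j) ^ 2 := by field_simp
      _ ≤ (r : ℝ)⁻¹ * ((r : ℝ) * ∑ a, M a j ^ 2) := by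
          apply mul_le_mul_of_nonneg_left hcs (by positivity)
      _ = ∑ a, M a j ^ 2 := by field_simp
  · norm_num

/-- `‖rowDev M‖ ≤ 2 ‖M‖`. -/
lemma rowDev_norm_le {r d : ℕ} (hr : 0 < r) (M : Matrix (Fin r) (Fin d) ℝ) :
    ‖rowDev M‖ ≤ 2 * ‖M‖ := by
  calc ‖rowDev M‖ ≤ ‖M‖ + ‖(Matrix.of fun (_ : Fin r) j => (r : ℝ)⁻¹ * ∑ a, M a j :
        Matrix (Fin r) (Fin d) ℝ)‖ := norm_sub_le _ _
    _ ≤ ‖M‖ + ‖M‖ := by linarith [avg_norm_le hr M]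
    _ = 2 * ‖M‖ := by ring

/-- Lemma 2 of the paper: under the delayed leader dynamics with
`β ∈ (0, 1 - e^{-ln(1/δ_C)/τ})`, the leaders reach consensus exponentially:
`‖X_ℓ(k) - 𝟙 x̄_ℓ(k)ᵀ‖ ≤ 2 η^k ‖X_ℓ(0)‖` with `η = 1 - β + δ_C β/(1-β)^τ < 1`. -/
theorem stmt_7 (r d : ℕ) (hr : 0 < r) (β δC : ℝ) (τ : ℕ)
    (hδC : δC ∈ Set.Ioo (0 : ℝ) 1)
    (hβ0 : 0 < β) (hβ1 : β < 1 - Real.exp (-Real.log (1 / δC) / τ))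
    (V : ℤ → Matrix (Fin r) (Fin r) ℝ) (hV : ∀ k, V k ∈ doublyStochastic ℝ (Fin r))
    (hVδ : ∀ k, ∀ Y : Matrix (Fin r) (Fin d) ℝ, (∀ j, (∑ a, Y a j) = 0) → ‖V k * Y‖ ≤ δC * ‖Y‖)
    (Xl : ℤ → Matrix (Fin r) (Fin d) ℝ)
    (hinit : ∀ k : ℤ, -(τ : ℤ) ≤ k → k ≤ 0 → Xl k = Xl 0)
    (hdyn : ∀ k : ℤ, 0 ≤ k → Xl (k + 1) = (1 - β) • Xl k + β • (V k * Xl (k - τ))) :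
    1 - β + δC * β / (1 - β) ^ τ < 1 ∧
    ∀ k : ℤ, 0 ≤ k →
      ‖rowDev (Xl k)‖ ≤ 2 * (1 - β + δC * β / (1 - β) ^ τ) ^ k.toNat * ‖Xl 0‖ := by
  obtain ⟨hδ0, hδ1⟩ := hδC
  -- τ ≠ 0
  have hτ : τ ≠ 0 := by
    intro h
    subst h
    simp only [Nat.cast_zero, div_zero, Real.exp_zero] at hβ1
    linarith
  have hexp_pos := Real.exp_pos (-Real.log (1 / δC) / τ)
  have hβlt1 : β < 1 := by linarith
  have h1β : (0:ℝ) < 1 - β := by linarith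
  -- δC < (1-β)^τ
  have hδτ : δC < (1 - β) ^ τ := by
    have he : Real.exp (-Real.log (1 / δC) / τ) ^ τ = δC := by
      rw [← Real.exp_nat_mul]
      have : (τ : ℝ) * (-Real.log (1 / δC) / τ) = -Real.log (1 / δC) := by
        field_simp
      rw [this, one_div, Real.log_inv, neg_neg, Real.exp_log hδ0]
    calc δC = Real.exp (-Real.log (1 / δC) / τ) ^ τ := he.symm
      _ < (1 - β) ^ τ :=
        pow_lt_pow_left₀ (by linarith) hexp_pos.le hτ
  have hpowpos : (0:ℝ) < (1 - β) ^ τ := pow_pos h1β τ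
  set η : ℝ := 1 - β + δC * β / (1 - β) ^ τ with hηdef
  have hfrac_pos : 0 < δC * β / (1 - β) ^ τ := by positivity
  have hη_lt1 : η < 1 := by
    have : δC * β / (1 - β) ^ τ < β := by
      rw [div_lt_iff₀ hpowpos]
      calc δC * β < (1 - β) ^ τ * β := mul_lt_mul_of_pos_right hδτ hβ0
        _ = β * (1 - β) ^ τ := by ring
    simp only [hηdef]; linarith
  have hη_pos : 0 < η := by simp only [hηdef]; linarith
  have hβ_le_η : 1 - β ≤ η := by simp only [hηdef]; linarith
  refine ⟨hη_lt1, ?_⟩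
  -- the key power inequality
  have hkey : ∀ n : ℕ, δC * η ^ (n - τ) ≤ δC / (1 - β) ^ τ * η ^ n := by
    intro n
    have h1 : (1 - β) ^ τ * η ^ (n - τ) ≤ η ^ n := by
      calc (1 - β) ^ τ * η ^ (n - τ) ≤ η ^ τ * η ^ (n - τ) := by
            apply mul_le_mul_of_nonneg_right (pow_le_pow_left₀ h1β.le hβ_le_η τ)
              (pow_nonneg hη_pos.le _)
        _ = η ^ (τ + (n - τ)) := (pow_add η τ (n - τ)).symm
        _ ≤ η ^ n := pow_le_pow_of_le_one hη_pos.le hη_lt1.le (by omega)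
    calc δC * η ^ (n - τ) = δC / (1 - β) ^ τ * ((1 - β) ^ τ * η ^ (n - τ)) := by
          field_simp
      _ ≤ δC / (1 - β) ^ τ * η ^ n := by
          apply mul_le_mul_of_nonneg_left h1 (by positivity)
  set C : ℝ := 2 * ‖Xl 0‖ with hCdef
  have hC0 : 0 ≤ C := by positivity
  have hbase : ‖rowDev (Xl 0)‖ ≤ C := by
    simpa [hCdef] using rowDev_norm_le hr (Xl 0)
  -- main induction
  have Q : ∀ n : ℕ, ‖rowDev (Xl (n : ℤ))‖ ≤ η ^ n * C := by
    intro n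
    induction n using Nat.strong_induction_on with
    | _ n ih =>
      match n with
      | 0 => simpa using hbase
      | Nat.succ m =>
        have hm : (0:ℤ) ≤ (m : ℤ) := Int.natCast_nonneg m
        have hdm := hdyn (m : ℤ) hm
        have hcast : ((m + 1 : ℕ) : ℤ) = (m : ℤ) + 1 := by push_cast; ring
        have hdev : rowDev (Xl ((m + 1 : ℕ) : ℤ)) =
            (1 - β) • rowDev (Xl (m : ℤ)) +
              β • (V (m : ℤ) * rowDev (Xl ((m : ℤ) - τ))) := by
          rw [hcast, hdm, rowDev_comb, rowDev_mul _ (hV _)]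
        -- bound on the delayed term
        have hdelay : ‖rowDev (Xl ((m : ℤ) - τ))‖ ≤ η ^ (m - τ) * C := by
          by_cases hmτ : τ ≤ m
          · have : (m : ℤ) - τ = ((m - τ : ℕ) : ℤ) := by push_cast [hmτ]; ring
            rw [this]
            exact ih (m - τ) (by omega)
          · have h0 : Xl ((m : ℤ) - τ) = Xl 0 :=
              hinit _ (by omega) (by omega)
            have hz : m - τ = 0 := by omega
            rw [h0, hz, pow_zero, one_mul]
            exact hbase
        have hcolsum := rowDev_colsum hr (Xl ((m : ℤ) - τ))
        have hVbound : ‖V (m : ℤ) * rowDev (Xl ((m : ℤ) - τ))‖ ≤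
            δC * ‖rowDev (Xl ((m : ℤ) - τ))‖ := hVδ _ _ hcolsum
        have hnorm : ‖rowDev (Xl ((m + 1 : ℕ) : ℤ))‖ ≤
            (1 - β) * ‖rowDev (Xl (m : ℤ))‖ +
              β * (δC * ‖rowDev (Xl ((m : ℤ) - τ))‖) := by
          rw [hdev]
          calc ‖(1 - β) • rowDev (Xl (m : ℤ)) +
                β • (V (m : ℤ) * rowDev (Xl ((m : ℤ) - τ)))‖
              ≤ ‖(1 - β) • rowDev (Xl (m : ℤ))‖ +
                ‖β • (V (m : ℤ) * rowDev (Xl ((m : ℤ) - τ)))‖ := norm_add_le _ _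
            _ = (1 - β) * ‖rowDev (Xl (m : ℤ))‖ +
                β * ‖V (m : ℤ) * rowDev (Xl ((m : ℤ) - τ))‖ := by
                rw [norm_smul, norm_smul, Real.norm_eq_abs, Real.norm_eq_abs,
                  abs_of_pos h1β, abs_of_pos hβ0]
            _ ≤ (1 - β) * ‖rowDev (Xl (m : ℤ))‖ +
                β * (δC * ‖rowDev (Xl ((m : ℤ) - τ))‖) := by
                have := mul_le_mul_of_nonneg_left hVbound hβ0.le
                linarith
        have ihm := ih m (Nat.lt_succ_self m)
        have hkeym := hkey m
        calc ‖rowDev (Xl ((Nat.succ m : ℕ) : ℤ))‖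
            ≤ (1 - β) * ‖rowDev (Xl (m : ℤ))‖ +
              β * (δC * ‖rowDev (Xl ((m : ℤ) - τ))‖) := hnorm
          _ ≤ (1 - β) * (η ^ m * C) + β * (δC * (η ^ (m - τ) * C)) := by
              have h2 : δC * ‖rowDev (Xl ((m : ℤ) - τ))‖ ≤ δC * (η ^ (m - τ) * C) :=
                mul_le_mul_of_nonneg_left hdelay hδ0.le
              have h3 := mul_le_mul_of_nonneg_left h2 hβ0.le
              have h4 := mul_le_mul_of_nonneg_left ihm h1β.le
              linarith
          _ ≤ (1 - β) * (η ^ m * C) + β * (δC / (1 - β) ^ τ * η ^ m * C) := by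
              have : δC * (η ^ (m - τ) * C) ≤ δC / (1 - β) ^ τ * η ^ m * C := by
                calc δC * (η ^ (m - τ) * C) = (δC * η ^ (m - τ)) * C := by ring
                  _ ≤ (δC / (1 - β) ^ τ * η ^ m) * C :=
                      mul_le_mul_of_nonneg_right hkeym hC0
              have := mul_le_mul_of_nonneg_left this hβ0.le
              linarith
          _ = η ^ (Nat.succ m) * C := by
              simp only [hηdef, pow_succ]
              ring
  intro k hk
  have hkn : k = ((k.toNat : ℕ) : ℤ) := (Int.toNat_of_nonneg hk).symm
  have := Q k.toNat
  rw [← hkn] at this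
  calc ‖rowDev (Xl k)‖ ≤ η ^ k.toNat * C := this
    _ = 2 * (1 - β + δC * β / (1 - β) ^ τ) ^ k.toNat * ‖Xl 0‖ := by
        simp only [hηdef, hCdef]; ring
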